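/- Let t be a random index in {1,…,n} distributed according to P. Then the variance of X_t satisfies Var[X_t] ≤ ||v_k||² ||v_m||², where ||v_k||² = Σ_{i=1}^n ||v_k(i)||² and ||v_m||² = Σ_{i=1}^n ||v_m(i)||². -/

import Mathlib

/-- The variance of the importance-sampling random variable `X_t` satisfies
`Var[X_t] = Σ_t P(t) (X_t − E[X_t])² ≤ ‖v_k‖² ‖v_m‖²`, where
`‖v_k‖² = Σ_i ‖v_k(i)‖²` and `‖v_m‖² = Σ_i ‖v_m(i)‖²`. -/
theorem fmc_variance_le
    {n d : ℕ} (hn : 0 < n) (hd : 0 < d)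
    (vk vm : Fin n → EuclideanSpace ℝ (Fin d))
    (S : ℝ) (hS : S = ∑ j, ‖vk j‖ * ‖vm j‖) (hSpos : 0 < S)
    (P : Fin n → ℝ) (hP : ∀ t, P t = ‖vk t‖ * ‖vm t‖ / S)
    (X : Fin n → ℝ)
    (hX : ∀ t, X t = if 0 < P t then (inner ℝ (vk t) (vm t) : ℝ) / P t else 0) :
    ∑ t, P t * (X t - ∑ s, P s * X s) ^ 2
      ≤ (∑ i, ‖vk i‖ ^ 2) * (∑ i, ‖vm i‖ ^ 2) := by
  set μ : ℝ := ∑ s, P s * X s with hμ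
  have hPsum : ∑ t, P t = 1 := by
    simp only [hP]
    rw [← Finset.sum_div, ← hS, div_self hSpos.ne']
  -- Step 1: variance = E[X²] - μ² ≤ E[X²]
  have hvar : ∑ t, P t * (X t - μ) ^ 2 = (∑ t, P t * X t ^ 2) - μ ^ 2 := by
    have : ∀ t ∈ Finset.univ, P t * (X t - μ) ^ 2
        = P t * X t ^ 2 - 2 * μ * (P t * X t) + μ ^ 2 * P t := by
      intro t _; ring
    rw [Finset.sum_congr rfl this, Finset.sum_add_distrib, Finset.sum_sub_distrib,
      ← Finset.mul_sum, ← Finset.mul_sum, hPsum, ← hμ]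
    ring
  have hμsq : 0 ≤ μ ^ 2 := sq_nonneg μ
  -- Step 2: termwise bound on E[X²]
  have key : ∀ t, P t * X t ^ 2 ≤ (‖vk t‖ * ‖vm t‖) * S := by
    intro t
    rw [hX t]
    by_cases h : 0 < P t
    · simp only [h, if_true]
      have hP' := hP t
      have hab : 0 < ‖vk t‖ * ‖vm t‖ := by
        have : ‖vk t‖ * ‖vm t‖ = P t * S := by rw [hP']; field_simp
        rw [this]; positivity
      have hι : (inner ℝ (vk t) (vm t) : ℝ) ^ 2 ≤ (‖vk t‖ * ‖vm t‖) ^ 2 := by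
        have h1 := abs_real_inner_le_norm (vk t) (vm t)
        nlinarith [sq_abs (inner ℝ (vk t) (vm t) : ℝ), abs_nonneg (inner ℝ (vk t) (vm t) : ℝ)]
      have heq : P t * ((inner ℝ (vk t) (vm t) : ℝ) / P t) ^ 2
          = (inner ℝ (vk t) (vm t) : ℝ) ^ 2 / P t := by
        field_simp
      rw [heq, hP', div_div_eq_mul_div, div_le_iff₀ hab]
      nlinarith [hSpos.le]
    · simp only [h, if_false]
      have : 0 ≤ (‖vk t‖ * ‖vm t‖) * S := by positivity
      simpa using this
  have hEX2 : ∑ t, P t * X t ^ 2 ≤ S * S := by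
    calc ∑ t, P t * X t ^ 2 ≤ ∑ t, (‖vk t‖ * ‖vm t‖) * S :=
          Finset.sum_le_sum fun t _ => key t
      _ = (∑ t, ‖vk t‖ * ‖vm t‖) * S := by rw [Finset.sum_mul]
      _ = S * S := by rw [← hS]
  -- Step 3: S² ≤ (∑‖vk‖²)(∑‖vm‖²) by Cauchy–Schwarz
  have hCS : S * S ≤ (∑ i, ‖vk i‖ ^ 2) * (∑ i, ‖vm i‖ ^ 2) := by
    have h2 := Finset.sum_mul_sq_le_sq_mul_sq Finset.univ
      (fun i => ‖vk i‖) (fun i => ‖vm i‖)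
    nlinarith [h2, hS]
  linarith [hvar, hEX2, hCS, hμsq]
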